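/- (Angular-momentum-deficit derivative bound) Let V : ℝ^N \ {0} → ℝ be C¹, let I ⊆ ℝ be an open interval, and let u : I → ℝ^N \ {0} be twice continuously differentiable with ü(t) + ∇V(u(t)) = 0 on I. Define A(t) := √(|u(t)|² |u̇(t)|² - (u(t), u̇(t))²). Then the function t ↦ A(t)² is differentiable on I and |d/dt (A(t)²)| ≤ 2 A(t) |u(t)| |∇V(u(t))| for every t ∈ I. -/

import Mathlib

open scoped InnerProductSpace

/-- Angular-momentum-deficit derivative bound: for a `C²` solution of
`ü + ∇V(u) = 0` avoiding the origin on an open interval, `t ↦ A(t)²` is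
differentiable and `|d/dt A(t)²| ≤ 2 A(t) ‖u t‖ ‖∇V (u t)‖`. -/
theorem stmt_15 {N : ℕ} (hN : 2 ≤ N) (V : EuclideanSpace ℝ (Fin N) → ℝ)
    (hV : ContDiffOn ℝ 1 V {0}ᶜ)
    (I : Set ℝ) (hI : IsOpen I) (hI' : I.OrdConnected)
    (u : ℝ → EuclideanSpace ℝ (Fin N)) (hu : ContDiffOn ℝ 2 u I)
    (hu0 : ∀ t ∈ I, u t ≠ 0)
    (hode : ∀ t ∈ I, deriv (deriv u) t + gradient V (u t) = 0)
    (A : ℝ → ℝ)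
    (hA : ∀ t, A t =
      Real.sqrt (‖u t‖ ^ 2 * ‖deriv u t‖ ^ 2 - ⟪u t, deriv u t⟫_ℝ ^ 2)) :
    ∀ t ∈ I, DifferentiableAt ℝ (fun s => A s ^ 2) t ∧
      |deriv (fun s => A s ^ 2) t| ≤ 2 * A t * ‖u t‖ * ‖gradient V (u t)‖ := by
  intro t ht
  have hmem : I ∈ nhds t := hI.mem_nhds ht
  set v := deriv u with hv
  have hu1 : DifferentiableAt ℝ u t :=
    (hu.contDiffAt hmem).differentiableAt (by norm_num)
  have hdv : ContDiffOn ℝ 1 v I := hu.deriv_of_isOpen hI (by norm_num)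
  have hv1 : DifferentiableAt ℝ v t :=
    (hdv.contDiffAt hmem).differentiableAt (by norm_num)
  have hU : HasDerivAt u (v t) t := hu1.hasDerivAt
  have hV' : HasDerivAt v (deriv v t) t := hv1.hasDerivAt
  set g := gradient V (u t) with hg
  have hode' : deriv v t = -g := eq_neg_of_add_eq_zero_left (hode t ht)
  rw [hode'] at hV'
  -- rewrite A^2 as a polynomial in inner products
  have hnn : ∀ s, (0:ℝ) ≤ ‖u s‖ ^ 2 * ‖v s‖ ^ 2 - ⟪u s, v s⟫_ℝ ^ 2 := by
    intro s
    have := real_inner_mul_inner_self_le (u s) (v s)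
    rw [real_inner_self_eq_norm_sq, real_inner_self_eq_norm_sq] at this
    nlinarith
  have hfun : (fun s => A s ^ 2)
      = fun s => ⟪u s, u s⟫_ℝ * ⟪v s, v s⟫_ℝ - ⟪u s, v s⟫_ℝ * ⟪u s, v s⟫_ℝ := by
    funext s
    rw [hA, Real.sq_sqrt (hnn s), real_inner_self_eq_norm_sq,
      real_inner_self_eq_norm_sq]
    ring
  -- derivative of the polynomial expression
  set a := ⟪u t, u t⟫_ℝ with ha
  set b := ⟪u t, v t⟫_ℝ with hb
  have h1 : HasDerivAt (fun s => ⟪u s, u s⟫_ℝ) (⟪u t, v t⟫_ℝ + ⟪v t, u t⟫_ℝ) t :=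
    hU.inner ℝ hU
  have h2 : HasDerivAt (fun s => ⟪v s, v s⟫_ℝ) (⟪v t, -g⟫_ℝ + ⟪-g, v t⟫_ℝ) t :=
    hV'.inner ℝ hV'
  have h3 : HasDerivAt (fun s => ⟪u s, v s⟫_ℝ) (⟪u t, -g⟫_ℝ + ⟪v t, v t⟫_ℝ) t :=
    hU.inner ℝ hV'
  have hE : HasDerivAt
      (fun s => ⟪u s, u s⟫_ℝ * ⟪v s, v s⟫_ℝ - ⟪u s, v s⟫_ℝ * ⟪u s, v s⟫_ℝ)
      ((⟪u t, v t⟫_ℝ + ⟪v t, u t⟫_ℝ) * ⟪v t, v t⟫_ℝ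
        + ⟪u t, u t⟫_ℝ * (⟪v t, -g⟫_ℝ + ⟪-g, v t⟫_ℝ)
        - ((⟪u t, -g⟫_ℝ + ⟪v t, v t⟫_ℝ) * ⟪u t, v t⟫_ℝ
          + ⟪u t, v t⟫_ℝ * (⟪u t, -g⟫_ℝ + ⟪v t, v t⟫_ℝ))) t :=
    (h1.mul h2).sub (h3.mul h3)
  rw [← hfun] at hE
  refine ⟨hE.differentiableAt, ?_⟩
  rw [hE.deriv]
  -- identify the derivative as 2 ⟪w, g⟫ with w := b • u t - a • v t
  set w := b • u t - a • v t with hw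
  have hkey : (⟪u t, v t⟫_ℝ + ⟪v t, u t⟫_ℝ) * ⟪v t, v t⟫_ℝ
        + ⟪u t, u t⟫_ℝ * (⟪v t, -g⟫_ℝ + ⟪-g, v t⟫_ℝ)
        - ((⟪u t, -g⟫_ℝ + ⟪v t, v t⟫_ℝ) * ⟪u t, v t⟫_ℝ
          + ⟪u t, v t⟫_ℝ * (⟪u t, -g⟫_ℝ + ⟪v t, v t⟫_ℝ)) = 2 * ⟪w, g⟫_ℝ := by
    have hc : ⟪v t, u t⟫_ℝ = ⟪u t, v t⟫_ℝ := real_inner_comm _ _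
    have hgv : ⟪g, v t⟫_ℝ = ⟪v t, g⟫_ℝ := real_inner_comm _ _
    have hgu : ⟪g, u t⟫_ℝ = ⟪u t, g⟫_ℝ := real_inner_comm _ _
    simp only [hw, inner_sub_left, real_inner_smul_left, inner_neg_left,
      inner_neg_right, ha, hb, hc, hgv, hgu]
    ring
  rw [hkey]
  -- norm of w
  have hAnn : 0 ≤ A t := by rw [hA]; exact Real.sqrt_nonneg _
  have hA2 : A t ^ 2 = ‖u t‖ ^ 2 * ‖v t‖ ^ 2 - ⟪u t, v t⟫_ℝ ^ 2 := by
    rw [hA]; exact Real.sq_sqrt (hnn t)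
  have hwsq : ‖w‖ ^ 2 = (‖u t‖ * A t) ^ 2 := by
    have h0 : ‖w‖ ^ 2 = ⟪w, w⟫_ℝ := (real_inner_self_eq_norm_sq w).symm
    have hc : ⟪v t, u t⟫_ℝ = ⟪u t, v t⟫_ℝ := real_inner_comm _ _
    have huu : ⟪u t, u t⟫_ℝ = ‖u t‖ ^ 2 := real_inner_self_eq_norm_sq _
    have hvv : ⟪v t, v t⟫_ℝ = ‖v t‖ ^ 2 := real_inner_self_eq_norm_sq _
    rw [h0, hw]
    simp only [inner_sub_left, inner_sub_right, real_inner_smul_left,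
      real_inner_smul_right, ha, hb, hc, huu, hvv]
    linear_combination (-‖u t‖ ^ 2) * hA2
  have hwnorm : ‖w‖ = ‖u t‖ * A t := by
    have h := congrArg Real.sqrt hwsq
    rwa [Real.sqrt_sq (norm_nonneg _), Real.sqrt_sq (by positivity)] at h
  calc |2 * ⟪w, g⟫_ℝ| = 2 * |⟪w, g⟫_ℝ| := by rw [abs_mul]; norm_num
    _ ≤ 2 * (‖w‖ * ‖g‖) := by
        have := abs_real_inner_le_norm w g
        linarith
    _ = 2 * A t * ‖u t‖ * ‖g‖ := by rw [hwnorm]; ring
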